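/- arXiv:2503.22207 — 3 statements merged into one kernel-verified Lean document; each statement's English description precedes it below -/
import Mathlib

section
/- Let μ ≥ 1 and c be real numbers with 1 ≤ c ≤ μ, let a, b be positive reals, and let d_1, …, d_r be nonnegative reals such that c·a > d_i and μ·b > d_i for every i, and a + b > μ·(d_1 + ⋯ + d_r). Then 2ab > d_1² + ⋯ + d_r². -/
theorem stmt0 (μ c a b : ℝ) (r : ℕ) (d : Fin r → ℝ)
    (hμ : 1 ≤ μ) (hc1 : 1 ≤ c) (hcμ : c ≤ μ)
    (ha : 0 < a) (hb : 0 < b)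
    (hd : ∀ i, 0 ≤ d i)
    (hca : ∀ i, c * a > d i) (hμb : ∀ i, μ * b > d i)
    (hsum : a + b > μ * ∑ i, d i) :
    2 * a * b > ∑ i, (d i) ^ 2 := by
  have hsnn : 0 ≤ ∑ i, d i := Finset.sum_nonneg fun i _ => hd i
  rcases le_or_gt a b with hab | hab
  · have key : ∑ i, (d i) ^ 2 ≤ μ * a * ∑ i, d i := by
      rw [Finset.mul_sum]
      refine Finset.sum_le_sum fun i _ => ?_
      nlinarith [mul_nonneg (hd i) (sub_nonneg.mpr (hca i).le),
        mul_nonneg (mul_nonneg (hd i) ha.le) (sub_nonneg.mpr hcμ)]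
    nlinarith [mul_pos ha hb]
  · have key : ∑ i, (d i) ^ 2 ≤ μ * b * ∑ i, d i := by
      rw [Finset.mul_sum]
      refine Finset.sum_le_sum fun i _ => ?_
      nlinarith [hd i, hμb i]
    nlinarith [mul_pos ha hb]
end

section
/- Let a, b, d be positive reals and r a positive integer. If a ≥ √(r+1)·d and b > (r/(√(r+1)+1))·d, then min{a − d, b} < √(2ab − r·d²). Equivalently, (min{a − d, b})² < 2ab − rd², and 2ab − rd² > 0. -/
theorem stmt12 (a b d : ℝ) (r : ℕ)
    (ha : 0 < a) (hb : 0 < b) (hd : 0 < d) (hr : 0 < r)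
    (h1 : a ≥ Real.sqrt (r + 1) * d) (h2 : b > (r / (Real.sqrt (r + 1) + 1)) * d) :
    min (a - d) b < Real.sqrt (2 * a * b - r * d ^ 2) ∧
    (min (a - d) b) ^ 2 < 2 * a * b - r * d ^ 2 ∧
    2 * a * b - r * d ^ 2 > 0 := by
  set s := Real.sqrt (r + 1) with hs
  have hs0 : 0 ≤ s := Real.sqrt_nonneg _
  have hs2 : s ^ 2 = r + 1 := Real.sq_sqrt (by positivity)
  have hr1 : (1 : ℝ) ≤ r := by exact_mod_cast hr
  have hs1 : 1 < s := by
    nlinarith [sq_nonneg (s - 1)]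
  have h2' : b > (s - 1) * d := by
    have : (r : ℝ) / (s + 1) = s - 1 := by
      rw [div_eq_iff (by linarith)]; nlinarith
    rwa [this] at h2
  -- positivity of min
  have hmin0 : 0 < min (a - d) b := by
    have : 0 < a - d := by nlinarith [mul_nonneg (by linarith : (0:ℝ) ≤ a - s * d) (by positivity : (0:ℝ) ≤ a + s * d)]
    exact lt_min this hb
  have hsq : (min (a - d) b) ^ 2 < 2 * a * b - r * d ^ 2 := by
    have ha2 : a ^ 2 >= s ^ 2 * d ^ 2 := by nlinarith [mul_nonneg (by linarith : (0:ℝ) ≤ a - s * d) (by positivity : (0:ℝ) ≤ a + s * d)]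
    rcases lt_or_ge (a - d) b with h | h
    · rw [min_eq_left h.le]
      nlinarith [mul_pos ha (sub_pos.2 h)]
    · rw [min_eq_right h]
      have hbd : (s + 1) * d * ((s - 1) * d) < (s + 1) * d * b :=
        mul_lt_mul_of_pos_left h2' (by positivity)
      nlinarith [mul_nonneg hb.le (by linarith : (0:ℝ) <= a - d - b),
        mul_nonneg hb.le (by linarith : (0:ℝ) <= a - s * d)]
  have hpos : 2 * a * b - r * d ^ 2 > 0 := lt_trans (by positivity) hsq
  refine ⟨?_, hsq, hpos⟩
  rw [show min (a - d) b = Real.sqrt ((min (a - d) b) ^ 2) by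
    rw [Real.sqrt_sq hmin0.le]]
  exact Real.sqrt_lt_sqrt (by positivity) hsq
end

section
/- Let a, b, d be positive reals and r ≥ 3 an integer. Assume a > ((r+1)/2)·d and b > r·d. If either b ≥ (9/2)a − 2d or b ≤ 2(a − d), then min{3a − d, b} < √(2ab − r·d²). -/
theorem stmt14 (a b d : ℝ) (r : ℕ)
    (ha : 0 < a) (hb : 0 < b) (hd : 0 < d) (hr : 3 ≤ r)
    (h1 : a > ((r + 1) / 2) * d) (h2 : b > r * d)
    (h3 : b ≥ (9 / 2) * a - 2 * d ∨ b ≤ 2 * (a - d)) :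
    min (3 * a - d) b < Real.sqrt (2 * a * b - r * d ^ 2) := by
  have hr3 : (3 : ℝ) ≤ (r : ℝ) := by exact_mod_cast hr
  have key : (min (3 * a - d) b) ^ 2 < 2 * a * b - r * d ^ 2 := by
    rcases le_total (3 * a - d) b with hm | hm
    · rw [min_eq_left hm]
      rcases h3 with h | h
      · nlinarith [sq_nonneg d, mul_pos hd hd]
      · nlinarith [sq_nonneg (3 * a - d - b), mul_pos hd hd, mul_pos hb hd]
    · rw [min_eq_right hm]
      rcases h3 with h | h
      · nlinarith [mul_pos hd hd, sq_nonneg (b - 3 * a + d)]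
      · nlinarith [mul_pos hd hd, mul_pos hb hd]
  have hpos : 0 ≤ min (3 * a - d) b := by
    have : 0 < 3 * a - d := by nlinarith
    positivity
  rw [show Real.sqrt (2 * a * b - r * d ^ 2) = Real.sqrt (2 * a * b - r * d ^ 2) from rfl]
  exact (Real.lt_sqrt hpos).mpr key
end
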